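/- arXiv:1202.0864 — 2 statements merged into one kernel-verified Lean document; each statement's English description precedes it below -/
import Mathlib

section
/- Let p be a prime. Let G ∈ Z_p^{l×n}, ΔG ∈ Z_p^{k×n}, and B ∈ Z_p^n be mutually independent and each uniformly distributed. Then for any a, ã ∈ Z_p^l and m, m̃ ∈ Z_p^k with m ≠ m̃, the random vectors aG + mΔG + B and ãG + m̃ΔG + B are independent and each uniform on Z_p^n. -/
open Matrix Finset

/-- For mutually independent uniformly random `G ∈ Z_p^{l×n}`, `ΔG ∈ Z_p^{k×n}`, `B ∈ Z_p^n`,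
and any `a, a' ∈ Z_p^l`, `m ≠ m̃` in `Z_p^k`, the random vectors `aG + mΔG + B` and
`a'G + m̃ΔG + B` are independent and each uniform on `Z_p^n`; equivalently, for all
`u, u' ∈ Z_p^n` the probability that both equalities hold is `p^{-2n}`. -/
theorem stmt2 (p : ℕ) (hp : p.Prime) [NeZero p] (l n k : ℕ)
    (a a' : Fin l → ZMod p) (m mt : Fin k → ZMod p) (hne : m ≠ mt)
    (u u' : Fin n → ZMod p) :
    (Finset.univ.filter
        (fun T : Matrix (Fin l) (Fin n) (ZMod p) × Matrix (Fin k) (Fin n) (ZMod p) ×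
            (Fin n → ZMod p) =>
          a ᵥ* T.1 + m ᵥ* T.2.1 + T.2.2 = u ∧ a' ᵥ* T.1 + mt ᵥ* T.2.1 + T.2.2 = u')).card
        * p ^ (2 * n)
      = Fintype.card (Matrix (Fin l) (Fin n) (ZMod p) × Matrix (Fin k) (Fin n) (ZMod p) ×
          (Fin n → ZMod p)) := by
  classical
  haveI := Fact.mk hp
  obtain ⟨i0, hi0⟩ := Function.ne_iff.mp hne
  set c : ZMod p := mt i0 - m i0 with hc
  have hc0 : c ≠ 0 := sub_ne_zero.mpr (Ne.symm hi0)
  set α := Matrix (Fin l) (Fin n) (ZMod p) × Matrix (Fin k) (Fin n) (ZMod p) × (Fin n → ZMod p)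
  let F : α → (Fin n → ZMod p) × (Fin n → ZMod p) := fun T =>
    (a ᵥ* T.1 + m ᵥ* T.2.1 + T.2.2, a' ᵥ* T.1 + mt ᵥ* T.2.1 + T.2.2)
  have hF_sub : ∀ T T' : α, F (T - T') = F T - F T' := by
    rintro ⟨G, D, B⟩ ⟨G', D', B'⟩
    have hh : ((G, D, B) : α) - (G', D', B') = (G - G', D - D', B - B') := rfl
    simp only [F, hh, Prod.ext_iff]
    constructor <;> funext j <;> simp [Matrix.vecMul_sub] <;> ring
  have hF_add : ∀ T T' : α, F (T + T') = F T + F T' := by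
    rintro ⟨G, D, B⟩ ⟨G', D', B'⟩
    have hh : ((G, D, B) : α) + (G', D', B') = (G + G', D + D', B + B') := rfl
    simp only [F, hh, Prod.ext_iff]
    constructor <;> funext j <;> simp [Matrix.vecMul_add] <;> ring
  -- particular solution
  let sol : (Fin n → ZMod p) → (Fin n → ZMod p) → α := fun v v' =>
    ⟨0, Matrix.of fun i j => if i = i0 then c⁻¹ * (v' j - v j) else 0,
      fun j => v j - m i0 * (c⁻¹ * (v' j - v j))⟩
  have hsol : ∀ v v', F (sol v v') = (v, v') := by
    intro v v'
    have hvm : ∀ (w : Fin k → ZMod p) j,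
        (w ᵥ* (Matrix.of fun i j => if i = i0 then c⁻¹ * (v' j - v j) else 0)) j
          = w i0 * (c⁻¹ * (v' j - v j)) := by
      intro w j
      simp [Matrix.vecMul, dotProduct, mul_ite]
    have hcc : c * c⁻¹ = 1 := mul_inv_cancel₀ hc0
    simp only [F, sol, Prod.ext_iff]
    constructor
    · funext j; simp [Matrix.vecMul_zero, hvm]
      try ring
    · funext j; simp [Matrix.vecMul_zero, hvm]
      linear_combination (v' j - v j) * hcc
  -- fiber cardinalities are all equal
  have key : ∀ v v' : Fin n → ZMod p,
      (univ.filter (fun T : α => F T = (v, v'))).card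
        = (univ.filter (fun T : α => F T = ((0 : Fin n → ZMod p), (0 : Fin n → ZMod p)))).card := by
    intro v v'
    apply Finset.card_bij' (fun T _ => T - sol v v') (fun T _ => T + sol v v')
    · intro T hT
      simp only [mem_filter, mem_univ, true_and] at hT ⊢
      rw [hF_sub, hT, hsol]
      simp [Prod.ext_iff]
    · intro T hT
      simp only [mem_filter, mem_univ, true_and] at hT ⊢
      rw [hF_add, hT, hsol]
      simp
    · intro T _; simp
    · intro T _; simp
  -- total count
  have htotal : (Finset.univ : Finset α).card
      = ∑ vv : (Fin n → ZMod p) × (Fin n → ZMod p),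
          (univ.filter (fun T : α => F T = vv)).card := by
    exact Finset.card_eq_sum_card_fiberwise (fun T _ => mem_univ (F T))
  have hcard2 : Fintype.card ((Fin n → ZMod p) × (Fin n → ZMod p)) = p ^ (2 * n) := by
    simp [Fintype.card_prod, Fintype.card_fun, ZMod.card, two_mul, pow_add]
  have hsum : (Finset.univ : Finset α).card
      = (univ.filter (fun T : α => F T = (u, u'))).card * p ^ (2 * n) := by
    rw [htotal]
    have h1 : ∀ vv : (Fin n → ZMod p) × (Fin n → ZMod p),
        (univ.filter (fun T : α => F T = vv)).card
          = (univ.filter (fun T : α => F T = (u, u'))).card := by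
      intro vv
      rw [show vv = (vv.1, vv.2) from rfl, key vv.1 vv.2, key u u']
    rw [Finset.sum_congr rfl (fun vv _ => h1 vv), Finset.sum_const, smul_eq_mul,
      Finset.card_univ, hcard2, mul_comm]
  have hEq : (Finset.univ.filter
        (fun T : α => a ᵥ* T.1 + m ᵥ* T.2.1 + T.2.2 = u ∧ a' ᵥ* T.1 + mt ᵥ* T.2.1 + T.2.2 = u'))
      = Finset.univ.filter (fun T : α => F T = (u, u')) := by
    apply Finset.filter_congr
    intro T _
    simp [F, Prod.ext_iff]
  rw [hEq, ← hsum, Finset.card_univ]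
end

section
/- Let F_1 ⊆ F_2 ⊆ ··· be an increasing sequence of σ-algebras on a measurable space A and let F_∞ be the σ-algebra generated by their union. Let P and Q be probability measures on (A, F_∞). Then the relative entropies converge: D(P|_{F_n} ‖ Q|_{F_n}) → D(P|_{F_∞} ‖ Q|_{F_∞}) as n → ∞ (with the convention that the limit may be +∞). -/
open MeasureTheory Filter

open Classical in
/-- The Kullback-Leibler divergence `D(μ‖ν)`: equal to `∫ log(dμ/dν) dμ` when `μ ≪ ν`
(and the integrand is `μ`-integrable), and `+∞` otherwise. Valued in `ℝ≥0∞`. -/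
noncomputable def klDivergence {α : Type*} [MeasurableSpace α] (μ ν : Measure α) : ENNReal :=
  if μ ≪ ν ∧ Integrable (fun x => Real.log (μ.rnDeriv ν x).toReal) μ then
    ENNReal.ofReal (∫ x, Real.log (μ.rnDeriv ν x).toReal ∂μ)
  else ⊤

open scoped ENNReal NNReal

section Elementary

lemma mul_log_add_exp_nonneg {x : ℝ} (hx : 0 ≤ x) :
    0 ≤ x * Real.log x + Real.exp (-1) := by
  rcases eq_or_lt_of_le hx with h | hx
  · simp [← h]; exact (Real.exp_pos _).le
  · have ht : (0:ℝ) < x⁻¹ := inv_pos.2 hx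
    have h1 : Real.log (x⁻¹ * Real.exp (-1)) ≤ x⁻¹ * Real.exp (-1) - 1 :=
      Real.log_le_sub_one_of_pos (by positivity)
    rw [Real.log_mul ht.ne' (Real.exp_pos _).ne', Real.log_exp, Real.log_inv] at h1
    -- -log x - 1 ≤ x⁻¹ * exp (-1) - 1
    have h2 : -Real.log x ≤ x⁻¹ * Real.exp (-1) := by linarith
    have h3 := mul_le_mul_of_nonneg_left h2 hx.le
    have h4 : x * x⁻¹ = 1 := mul_inv_cancel₀ hx.ne'
    nlinarith [Real.exp_pos (-1)]

lemma tangent_le {x q : ℝ} (hx : 0 ≤ x) (hq : 0 < q) :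
    x * Real.log q + x - q ≤ x * Real.log x := by
  rcases eq_or_lt_of_le hx with h | hx
  · simp [← h]; linarith
  · have h1 : Real.log (q / x) ≤ q / x - 1 := Real.log_le_sub_one_of_pos (by positivity)
    rw [Real.log_div hq.ne' hx.ne'] at h1
    have h3 := mul_le_mul_of_nonneg_left h1 hx.le
    have h4 : x * (q / x - 1) = q - x := by field_simp
    nlinarith

end Elementary

section Trim

variable {α : Type*} {m mΩ : MeasurableSpace α}

lemma measure_zero_of_trim_zero (hm : m ≤ mΩ) {μ : @Measure α mΩ} {s : Set α}
    (hs : μ.trim hm s = 0) : μ s = 0 := by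
  have h1 : μ.trim hm (@toMeasurable α m (μ.trim hm) s) = 0 := by
    rwa [@measure_toMeasurable α m]
  rw [trim_measurableSet_eq hm (@measurableSet_toMeasurable α m _ s)] at h1
  exact measure_mono_null (@subset_toMeasurable α m _ s) h1

lemma ae_of_ae_trim' (hm : m ≤ mΩ) {μ : @Measure α mΩ} {p : α → Prop}
    (h : ∀ᵐ x ∂(μ.trim hm), p x) : ∀ᵐ x ∂μ, p x := by
  rw [ae_iff] at h ⊢
  exact measure_zero_of_trim_zero hm h

lemma trim_ac (hm : m ≤ mΩ) {μ ν : @Measure α mΩ} (h : μ ≪ ν) :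
    μ.trim hm ≪ ν.trim hm := by
  intro s hs
  set t := @toMeasurable α m (ν.trim hm) s with ht
  have hts : s ⊆ t := @subset_toMeasurable α m _ s
  have htm : MeasurableSet[m] t := @measurableSet_toMeasurable α m _ s
  have h1 : ν.trim hm t = 0 := by rw [ht, @measure_toMeasurable α m]; exact hs
  rw [trim_measurableSet_eq hm htm] at h1
  have h2 : μ t = 0 := h h1
  have h3 : μ.trim hm t = 0 := by rwa [trim_measurableSet_eq hm htm]
  exact measure_mono_null hts h3

lemma isProbabilityMeasure_trim (hm : m ≤ mΩ) {μ : @Measure α mΩ}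
    (h : IsProbabilityMeasure μ) : IsProbabilityMeasure (μ.trim hm) :=
  ⟨by rw [trim_measurableSet_eq hm MeasurableSet.univ]; exact h.measure_univ⟩

end Trim



section LInt

variable {α : Type*} [mα : MeasurableSpace α] {μ ν : Measure α}

lemma lintegral_ofReal_eq_top_iff {f : α → ℝ} (hf : AEStronglyMeasurable f ν)
    (h0 : 0 ≤ᵐ[ν] f) : ∫⁻ x, ENNReal.ofReal (f x) ∂ν = ⊤ ↔ ¬ Integrable f ν := by
  have h1 : ∫⁻ x, ENNReal.ofReal (f x) ∂ν = ∫⁻ x, ‖f x‖₊ ∂ν :=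
    lintegral_congr_ae (h0.mono fun x hx => (Real.enorm_eq_ofReal hx).symm)
  constructor
  · intro ht hint
    have h3 := (hasFiniteIntegral_iff_ofReal h0).1 hint.2
    exact h3.ne ht
  · intro hni
    by_contra htop
    exact hni ⟨hf, (hasFiniteIntegral_iff_ofReal h0).2 (lt_top_iff_ne_top.2 htop)⟩

open Classical in
lemma klDivergence_def' (μ ν : Measure α) : klDivergence μ ν =
    if μ ≪ ν ∧ Integrable (fun x => Real.log (μ.rnDeriv ν x).toReal) μ then
      ENNReal.ofReal (∫ x, Real.log (μ.rnDeriv ν x).toReal ∂μ)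
    else ⊤ := rfl

/-- The auxiliary functional `J(μ,ν) = ∫⁻ (g log g + e⁻¹) dν` with `g = dμ/dν`. -/
noncomputable def Jfun (μ ν : Measure α) : ℝ≥0∞ :=
  ∫⁻ x, ENNReal.ofReal ((μ.rnDeriv ν x).toReal * Real.log (μ.rnDeriv ν x).toReal
    + Real.exp (-1)) ∂ν

lemma klDivergence_eq (h : μ ≪ ν) [IsProbabilityMeasure μ] [IsProbabilityMeasure ν] :
    klDivergence μ ν = Jfun μ ν - ENNReal.ofReal (Real.exp (-1)) := by
  set g : α → ℝ := fun x => (μ.rnDeriv ν x).toReal with hg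
  have hgm : StronglyMeasurable g := (Measure.measurable_rnDeriv μ ν).ennreal_toReal.stronglyMeasurable
  have hg0 : ∀ x, 0 ≤ g x := fun x => ENNReal.toReal_nonneg
  have hiff : Integrable (fun x => Real.log (g x)) μ ↔
      Integrable (fun x => g x * Real.log (g x)) ν := by
    rw [← integrable_rnDeriv_smul_iff h]
    simp [smul_eq_mul, hg]
  have hψm : AEStronglyMeasurable (fun x => g x * Real.log (g x) + Real.exp (-1)) ν :=
    ((Real.continuous_mul_log.comp_stronglyMeasurable hgm).add_const _).aestronglyMeasurable
  have hψ0 : 0 ≤ᵐ[ν] fun x => g x * Real.log (g x) + Real.exp (-1) :=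
    Filter.Eventually.of_forall fun x => mul_log_add_exp_nonneg (hg0 x)
  by_cases hint : Integrable (fun x => Real.log (g x)) μ
  · rw [klDivergence_def', if_pos ⟨h, hint⟩]
    have hφint : Integrable (fun x => g x * Real.log (g x)) ν := hiff.mp hint
    have hψint : Integrable (fun x => g x * Real.log (g x) + Real.exp (-1)) ν :=
      hφint.add (integrable_const _)
    have hJ : Jfun μ ν = ENNReal.ofReal (∫ x, (g x * Real.log (g x) + Real.exp (-1)) ∂ν) :=
      (ofReal_integral_eq_lintegral_ofReal hψint hψ0).symm
    have hI : ∫ x, Real.log (g x) ∂μ = ∫ x, g x * Real.log (g x) ∂ν := by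
      rw [← integral_rnDeriv_smul h (f := fun x => Real.log (g x))]
      simp [smul_eq_mul, hg]
    have hsum : ∫ x, (g x * Real.log (g x) + Real.exp (-1)) ∂ν
        = (∫ x, g x * Real.log (g x) ∂ν) + Real.exp (-1) := by
      rw [integral_add hφint (integrable_const _), integral_const]
      simp
    have hnn : 0 ≤ ∫ x, (g x * Real.log (g x) + Real.exp (-1)) ∂ν :=
      integral_nonneg fun x => mul_log_add_exp_nonneg (hg0 x)
    rw [hJ, hsum, hI]
    set a := ∫ x, g x * Real.log (g x) ∂ν
    rw [hsum] at hnn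
    rcases le_or_gt 0 a with ha | ha
    · rw [ENNReal.ofReal_add ha (Real.exp_pos _).le, ENNReal.add_sub_cancel_right ENNReal.ofReal_ne_top]
    · rw [ENNReal.ofReal_of_nonpos ha.le, tsub_eq_zero_of_le]
      exact ENNReal.ofReal_le_ofReal (by linarith)
  · rw [klDivergence_def', if_neg (by tauto)]
    have hψni : ¬ Integrable (fun x => g x * Real.log (g x) + Real.exp (-1)) ν := by
      intro hc
      refine hint (hiff.mpr ((hc.sub (integrable_const (Real.exp (-1)))).congr ?_))
      exact Filter.Eventually.of_forall fun x => by simp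
    have : Jfun μ ν = ⊤ := (lintegral_ofReal_eq_top_iff hψm hψ0).2 hψni
    rw [this, ENNReal.top_sub ENNReal.ofReal_ne_top]

end LInt
section CondexpId

variable {α : Type*} {m : MeasurableSpace α} [mΩ : MeasurableSpace α]

/-- The Radon–Nikodym derivative of the trimmed measures is the conditional expectation of
the Radon–Nikodym derivative. -/
lemma toReal_rnDeriv_trim_ae (hm : m ≤ mΩ) (P Q : Measure α)
    [IsProbabilityMeasure P] [IsProbabilityMeasure Q] (hPQ : P ≪ Q) :
    (fun x => ((P.trim hm).rnDeriv (Q.trim hm) x).toReal)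
      =ᵐ[Q] Q[fun x => (P.rnDeriv Q x).toReal | m] := by
  haveI hPt : IsProbabilityMeasure (P.trim hm) := isProbabilityMeasure_trim hm ‹_›
  haveI hQt : IsProbabilityMeasure (Q.trim hm) := isProbabilityMeasure_trim hm ‹_›
  have hACt : P.trim hm ≪ Q.trim hm := trim_ac hm hPQ
  set f : α → ℝ := fun x => ((P.trim hm).rnDeriv (Q.trim hm) x).toReal with hf
  have hfm : StronglyMeasurable[m] f :=
    (@Measure.measurable_rnDeriv α m _ _).ennreal_toReal.stronglyMeasurable
  have hfint : Integrable f Q := by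
    refine integrable_of_integrable_trim hm ?_
    exact @Measure.integrable_toReal_rnDeriv α m _ _ _
  refine (ae_eq_condExp_of_forall_setIntegral_eq hm
    (Measure.integrable_toReal_rnDeriv (μ := P) (ν := Q)) (fun s _ _ => hfint.integrableOn)
    (fun s hs _ => ?_) ⟨f, hfm, EventuallyEq.rfl⟩)
  rw [Measure.setIntegral_toReal_rnDeriv hPQ s]
  rw [setIntegral_trim hm hfm hs, Measure.setIntegral_toReal_rnDeriv hACt s]
  exact congrArg ENNReal.toReal (trim_measurableSet_eq hm hs)

end CondexpId

section Jensen

variable {α : Type*} {m : MeasurableSpace α} [mΩ : MeasurableSpace α] {ν : Measure α}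

lemma jensen_condexp (hm : m ≤ mΩ) [IsProbabilityMeasure ν] {g : α → ℝ}
    (hg : Integrable g ν) (hg0 : 0 ≤ᵐ[ν] g)
    (hφ : Integrable (fun x => g x * Real.log (g x)) ν) :
    Integrable (fun x => (ν[g|m]) x * Real.log ((ν[g|m]) x)) ν ∧
    ∫ x, (ν[g|m]) x * Real.log ((ν[g|m]) x) ∂ν ≤ ∫ x, g x * Real.log (g x) ∂ν := by
  set c : α → ℝ := ν[g|m] with hc
  set E : α → ℝ := ν[fun x => g x * Real.log (g x)|m] with hE
  -- for each positive rational q, affine lower bound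
  have key : ∀ q : ℚ, 0 < (q:ℝ) →
      ∀ᵐ x ∂ν, (Real.log q + 1) * c x - q ≤ E x := by
    intro q hq
    have haff : Integrable (fun x => (Real.log q + 1) * g x - (q:ℝ)) ν :=
      (hg.const_mul _).sub (integrable_const _)
    have hle : (fun x => (Real.log q + 1) * g x - (q:ℝ)) ≤ᵐ[ν]
        fun x => g x * Real.log (g x) := by
      filter_upwards [hg0] with x hx
      have := tangent_le hx hq
      nlinarith [this]
    have h1 : ν[fun x => (Real.log q + 1) * g x - (q:ℝ)|m] ≤ᵐ[ν] E :=
      condExp_mono haff hφ hle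
    have h2 : ν[fun x => (Real.log q + 1) * g x - (q:ℝ)|m]
        =ᵐ[ν] fun x => (Real.log q + 1) * c x - q := by
      have hs : ν[fun x => (Real.log q + 1) * g x|m] =ᵐ[ν]
          fun x => (Real.log q + 1) * c x := by
        have h := condExp_smul (μ := ν) (m := m) (Real.log q + 1) g
        have h' : ν[fun x => (Real.log q + 1) * g x|m] = ν[(Real.log q + 1) • g|m] := by
          congr 1
        refine h'.symm ▸ (h.trans (Filter.Eventually.of_forall fun x => ?_))
        simp only [Pi.smul_apply, smul_eq_mul]
        rfl
      have hsub := condExp_sub (μ := ν) (m := m) (hg.const_mul (Real.log q + 1))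
        (integrable_const (q:ℝ))
      refine hsub.trans ?_
      filter_upwards [hs] with x hx
      simp only [Pi.sub_apply, hx]
      rw [condExp_const hm]
    filter_upwards [h1, h2] with x h1x h2x
    rw [← h2x]; exact h1x
  have hcount : ∀ᵐ x ∂ν, ∀ q : ℚ, 0 < (q:ℝ) → (Real.log q + 1) * c x - q ≤ E x := by
    rw [ae_all_iff]
    intro q
    by_cases hq : 0 < (q:ℝ)
    · filter_upwards [key q hq] with x hx _; exact hx
    · filter_upwards with x hx; exact absurd hx hq
  have hc0 : 0 ≤ᵐ[ν] c := condExp_nonneg hg0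
  -- pointwise Jensen
  have hpt : ∀ᵐ x ∂ν, c x * Real.log (c x) ≤ E x := by
    filter_upwards [hcount, hc0] with x hx hcx
    simp only [Pi.zero_apply] at hcx
    rcases eq_or_lt_of_le hcx with h0 | h0
    · -- c x = 0
      rw [← h0]; simp only [zero_mul]
      have hseq : Tendsto (fun k : ℕ => -((1 / (k + 1) : ℚ) : ℝ)) atTop (nhds 0) := by
        rw [show (0:ℝ) = -0 by norm_num]
        apply Tendsto.neg
        have := tendsto_one_div_add_atTop_nhds_zero_nat (𝕜 := ℝ)
        refine this.congr fun k => ?_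
        push_cast; norm_num
      refine le_of_tendsto' hseq fun k => ?_
      have hk : 0 < ((1 / (k + 1) : ℚ) : ℝ) := by positivity
      have := hx (1 / (k + 1) : ℚ) hk
      rw [← h0] at this; linarith
    · -- c x > 0
      have hqs : ∀ k : ℕ, ∃ q : ℚ, c x < (q:ℝ) ∧ (q:ℝ) < c x + 1 / (k + 1) := by
        intro k
        obtain ⟨q, hq1, hq2⟩ := exists_rat_btwn (lt_add_of_pos_right (c x) (by positivity : (0:ℝ) < 1 / (k + 1)))
        exact ⟨q, hq1, hq2⟩
      choose qs hqs1 hqs2 using hqs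
      have hqt : Tendsto (fun k : ℕ => ((qs k : ℝ))) atTop (nhds (c x)) := by
        refine tendsto_of_tendsto_of_tendsto_of_le_of_le (g := fun _ => c x)
          (h := fun k : ℕ => c x + 1 / (k + 1)) tendsto_const_nhds ?_
          (fun k => (hqs1 k).le) (fun k => (hqs2 k).le)
        have h1 : Tendsto (fun k : ℕ => 1 / ((k:ℝ) + 1)) atTop (nhds 0) :=
          tendsto_one_div_add_atTop_nhds_zero_nat
        simpa using (tendsto_const_nhds : Tendsto (fun _ : ℕ => c x) atTop (nhds (c x))).add h1
      have hlim : Tendsto (fun k : ℕ => (Real.log (qs k) + 1) * c x - (qs k : ℝ))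
          atTop (nhds ((Real.log (c x) + 1) * c x - c x)) := by
        have hlog : Tendsto (fun k : ℕ => Real.log (qs k)) atTop (nhds (Real.log (c x))) :=
          ((Real.continuousAt_log h0.ne').tendsto).comp hqt
        exact ((hlog.add tendsto_const_nhds).mul tendsto_const_nhds).sub hqt
      have := le_of_tendsto' hlim fun k => hx (qs k) (lt_trans h0 (hqs1 k))
      nlinarith [this]
  -- integrability of φ ∘ c
  have hcm : AEStronglyMeasurable (fun x => c x * Real.log (c x)) ν :=
    (Real.continuous_mul_log.comp_stronglyMeasurable
      ((stronglyMeasurable_condExp (m := m)).mono hm)).aestronglyMeasurable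
  have hφc : Integrable (fun x => c x * Real.log (c x)) ν := by
    refine Integrable.mono' ((integrable_condExp (m := m) (μ := ν)
      (f := fun x => g x * Real.log (g x))).abs.add
      (integrable_const (Real.exp (-1)))) hcm ?_
    filter_upwards [hpt, hc0] with x hx hcx
    simp only [Pi.zero_apply] at hcx
    rw [Real.norm_eq_abs, abs_le]
    constructor
    · have := mul_log_add_exp_nonneg hcx
      have : -(Real.exp (-1)) ≤ c x * Real.log (c x) := by linarith
      have habs : -|E x| ≤ 0 := neg_nonpos.2 (abs_nonneg _)
      simp only [Pi.add_apply, Pi.abs_apply]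
      linarith
    · have : E x ≤ |E x| := le_abs_self _
      simp only [Pi.add_apply, Pi.abs_apply]
      have he := (Real.exp_pos (-1)).le
      linarith
  refine ⟨hφc, ?_⟩
  calc ∫ x, c x * Real.log (c x) ∂ν ≤ ∫ x, E x ∂ν := integral_mono_ae hφc integrable_condExp hpt
    _ = ∫ x, g x * Real.log (g x) ∂ν := integral_condExp hm

end Jensen
section Bound

variable {α : Type*} [mα : MeasurableSpace α]

lemma klDivergence_ge_bound (μ ν : Measure α) [IsProbabilityMeasure μ] [IsProbabilityMeasure ν]
    {A : Set α} (hA : MeasurableSet A) {q : ℝ} (hq : 0 < q) :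
    ENNReal.ofReal ((μ A).toReal * Real.log q + (μ A).toReal - q * (ν A).toReal - 1)
      ≤ klDivergence μ ν := by
  by_cases hc : μ ≪ ν ∧ Integrable (fun x => Real.log (μ.rnDeriv ν x).toReal) μ
  · rw [klDivergence_def', if_pos hc]
    refine ENNReal.ofReal_le_ofReal ?_
    set g : α → ℝ := fun x => (μ.rnDeriv ν x).toReal with hgdef
    have hg0 : ∀ x, 0 ≤ g x := fun x => ENNReal.toReal_nonneg
    have hg_int : Integrable g ν := Measure.integrable_toReal_rnDeriv
    have hφint : Integrable (fun x => g x * Real.log (g x)) ν := by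
      have := (integrable_rnDeriv_smul_iff hc.1 (f := fun x => Real.log (g x))).2 hc.2
      simpa [smul_eq_mul] using this
    have hI : ∫ x, Real.log (g x) ∂μ = ∫ x, g x * Real.log (g x) ∂ν := by
      rw [← integral_rnDeriv_smul hc.1 (f := fun x => Real.log (g x))]
      simp [smul_eq_mul]
      rfl
    show (μ A).toReal * Real.log q + (μ A).toReal - q * (ν A).toReal - 1
      ≤ ∫ x, Real.log (g x) ∂μ
    rw [hI]
    set h1 : α → ℝ := fun x => (Real.log q + 1) * g x - q with hh1
    set h2 : α → ℝ := fun x => g x - 1 with hh2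
    have hint1 : Integrable (A.indicator h1) ν :=
      ((hg_int.const_mul _).sub (integrable_const _)).indicator hA
    have hint2 : Integrable (Aᶜ.indicator h2) ν :=
      (hg_int.sub (integrable_const _)).indicator hA.compl
    have hle : ∀ x, A.indicator h1 x + Aᶜ.indicator h2 x ≤ g x * Real.log (g x) := by
      intro x
      by_cases hx : x ∈ A
      · rw [Set.indicator_of_mem hx, Set.indicator_of_notMem (by simpa using hx)]
        have := tangent_le (hg0 x) hq
        simp only [hh1, add_zero]
        nlinarith
      · rw [Set.indicator_of_notMem hx, Set.indicator_of_mem (by simpa using hx)]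
        have := tangent_le (hg0 x) one_pos
        rw [Real.log_one] at this
        simp only [hh2, zero_add]
        nlinarith
    have hIle : ∫ x, (A.indicator h1 x + Aᶜ.indicator h2 x) ∂ν
        ≤ ∫ x, g x * Real.log (g x) ∂ν :=
      integral_mono (hint1.add hint2) hφint hle
    have hEq1 : ∫ x, (A.indicator h1 x + Aᶜ.indicator h2 x) ∂ν
        = (∫ x in A, h1 x ∂ν) + ∫ x in Aᶜ, h2 x ∂ν := by
      rw [integral_add hint1 hint2, integral_indicator hA, integral_indicator hA.compl]
    have hA1 : ∫ x in A, h1 x ∂ν = (Real.log q + 1) * (μ A).toReal - q * (ν A).toReal := by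
      rw [hh1]
      rw [integral_sub ((hg_int.const_mul _).integrableOn)
        (integrableOn_const (measure_ne_top ν A))]
      rw [integral_const_mul, Measure.setIntegral_toReal_rnDeriv hc.1 A, setIntegral_const]
      simp [smul_eq_mul, mul_comm]
      rfl
    have hA2 : ∫ x in Aᶜ, h2 x ∂ν = (μ Aᶜ).toReal - (ν Aᶜ).toReal := by
      rw [hh2]
      rw [integral_sub (hg_int.integrableOn)
        (integrableOn_const (measure_ne_top ν Aᶜ))]
      rw [Measure.setIntegral_toReal_rnDeriv hc.1 Aᶜ, setIntegral_const]
      simp [smul_eq_mul]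
      rfl
    rw [hEq1, hA1, hA2] at hIle
    have hb1 : 0 ≤ (μ Aᶜ).toReal := ENNReal.toReal_nonneg
    have hb2 : (ν Aᶜ).toReal ≤ 1 := by
      have := prob_le_one (μ := ν) (s := Aᶜ)
      have h' := ENNReal.toReal_mono (by simp) this
      simpa using h'
    nlinarith
  · rw [klDivergence_def', if_neg hc]; exact le_top

end Bound

set_option maxHeartbeats 1000000 in
/-- For an increasing sequence of σ-algebras `F₁ ⊆ F₂ ⊆ ⋯` with `F_∞` generated by their
union, and probability measures `P, Q` on `F_∞`, the relative entropies of the restrictions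
converge: `D(P|_{F_n} ‖ Q|_{F_n}) → D(P|_{F_∞} ‖ Q|_{F_∞})` (possibly `+∞`). -/
theorem stmt11 {α : Type*} (F : ℕ → MeasurableSpace α) (hmono : Monotone F)
    (P Q : @Measure α (⨆ n, F n))
    (hP : @IsProbabilityMeasure α (⨆ n, F n) P)
    (hQ : @IsProbabilityMeasure α (⨆ n, F n) Q) :
    Tendsto
      (fun n => @klDivergence α (F n) (P.trim (le_iSup F n)) (Q.trim (le_iSup F n)))
      atTop (nhds (@klDivergence α (⨆ n, F n) P Q)) := by
  letI mΩ : MeasurableSpace α := ⨆ n, F n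
  haveI := hP; haveI := hQ
  set ℱ : Filtration ℕ mΩ := ⟨F, hmono, le_iSup F⟩ with hℱdef
  have hle : ∀ n, F n ≤ mΩ := le_iSup F
  have hPtr : ∀ n, IsProbabilityMeasure (P.trim (hle n)) :=
    fun n => isProbabilityMeasure_trim (hle n) hP
  have hQtr : ∀ n, IsProbabilityMeasure (Q.trim (hle n)) :=
    fun n => isProbabilityMeasure_trim (hle n) hQ
  by_cases hAC : P ≪ Q
  · -- absolutely continuous case
    set g : α → ℝ := fun x => (P.rnDeriv Q x).toReal with hgdef
    have hg0 : ∀ x, 0 ≤ g x := fun x => ENNReal.toReal_nonneg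
    have hgsm : StronglyMeasurable[mΩ] g :=
      (Measure.measurable_rnDeriv P Q).ennreal_toReal.stronglyMeasurable
    have hg_int : Integrable g Q := Measure.integrable_toReal_rnDeriv
    set c : ℕ → α → ℝ := fun n => Q[g | F n] with hcdef
    have hcsm : ∀ n, StronglyMeasurable[F n] (c n) := fun n => stronglyMeasurable_condExp
    have hcmeas : ∀ n, Measurable[mΩ] (c n) := fun n => ((hcsm n).mono (hle n)).measurable
    set T : ℕ → ℝ≥0∞ := fun n =>
      ∫⁻ x, ENNReal.ofReal (c n x * Real.log (c n x) + Real.exp (-1)) ∂Q with hTdef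
    set J : ℝ≥0∞ :=
      ∫⁻ x, ENNReal.ofReal (g x * Real.log (g x) + Real.exp (-1)) ∂Q with hJdef
    set e : ℝ≥0∞ := ENNReal.ofReal (Real.exp (-1)) with hedef
    -- identification of the klDivergence at level n
    have hid : ∀ n, (fun x => ((P.trim (hle n)).rnDeriv (Q.trim (hle n)) x).toReal)
        =ᵐ[Q] c n := fun n => toReal_rnDeriv_trim_ae (hle n) P Q hAC
    have hstep1 : ∀ n, @klDivergence α (F n) (P.trim (le_iSup F n)) (Q.trim (le_iSup F n))
        = T n - e := by
      intro n
      haveI := hPtr n; haveI := hQtr n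
      rw [klDivergence_eq (mα := F n) (trim_ac (hle n) hAC)]
      congr 1
      have hm1 : Measurable[F n] fun x =>
          ENNReal.ofReal (((P.trim (hle n)).rnDeriv (Q.trim (hle n)) x).toReal
            * Real.log ((P.trim (hle n)).rnDeriv (Q.trim (hle n)) x).toReal
            + Real.exp (-1)) := by
        have hb : Measurable[F n] fun x =>
            ((P.trim (hle n)).rnDeriv (Q.trim (hle n)) x).toReal :=
          @Measurable.ennreal_toReal α (F n) _ (@Measure.measurable_rnDeriv α (F n) _ _)
        have hΦ : Measurable fun y : ℝ => ENNReal.ofReal (y * Real.log y + Real.exp (-1)) :=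
          (ENNReal.continuous_ofReal.comp (Real.continuous_mul_log.add continuous_const)).measurable
        exact hΦ.comp hb
      refine Eq.trans (lintegral_trim (hle n) hm1) ?_
      refine lintegral_congr_ae ?_
      filter_upwards [hid n] with x hx
      rw [hx]
    have hstep2 : @klDivergence α mΩ P Q = J - e := klDivergence_eq hAC
    -- convergence of T to J
    have hψ0g : 0 ≤ᵐ[Q] fun x => g x * Real.log (g x) + Real.exp (-1) :=
      Filter.Eventually.of_forall fun x => mul_log_add_exp_nonneg (hg0 x)
    have hψmg : AEStronglyMeasurable (fun x => g x * Real.log (g x) + Real.exp (-1)) Q :=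
      ((Real.continuous_mul_log.comp_stronglyMeasurable hgsm).add_const _).aestronglyMeasurable
    have hupper : ∀ n, T n ≤ J := by
      intro n
      by_cases hJtop : J = ⊤
      · rw [hJtop]; exact le_top
      · have hψint : Integrable (fun x => g x * Real.log (g x) + Real.exp (-1)) Q := by
          by_contra hni
          exact hJtop ((lintegral_ofReal_eq_top_iff hψmg hψ0g).2 hni)
        have hφint : Integrable (fun x => g x * Real.log (g x)) Q := by
          refine ((hψint.sub (integrable_const (Real.exp (-1)))).congr ?_)
          exact Filter.Eventually.of_forall fun x => by simp
        have hg0ae : 0 ≤ᵐ[Q] g := Filter.Eventually.of_forall hg0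
        obtain ⟨hjint, hjle⟩ := jensen_condexp (hle n) hg_int hg0ae hφint
        have hc0 : 0 ≤ᵐ[Q] c n := condExp_nonneg hg0ae
        have hψc0 : 0 ≤ᵐ[Q] fun x => c n x * Real.log (c n x) + Real.exp (-1) := by
          filter_upwards [hc0] with x hx
          exact mul_log_add_exp_nonneg hx
        have hψcint : Integrable (fun x => c n x * Real.log (c n x) + Real.exp (-1)) Q :=
          hjint.add (integrable_const _)
        have hT : T n = ENNReal.ofReal
            (∫ x, (c n x * Real.log (c n x) + Real.exp (-1)) ∂Q) :=
          (ofReal_integral_eq_lintegral_ofReal hψcint hψc0).symm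
        have hJ : J = ENNReal.ofReal
            (∫ x, (g x * Real.log (g x) + Real.exp (-1)) ∂Q) :=
          (ofReal_integral_eq_lintegral_ofReal hψint hψ0g).symm
        rw [hT, hJ]
        refine ENNReal.ofReal_le_ofReal ?_
        rw [integral_add hjint (integrable_const _), integral_add hφint (integrable_const _)]
        linarith
    haveI : SigmaFiniteFiltration Q ℱ := IsFiniteMeasure.sigmaFiniteFiltration Q ℱ
    have hgsm' : StronglyMeasurable[⨆ n, (ℱ n : MeasurableSpace α)] g := hgsm
    have hconv : ∀ᵐ x ∂Q, Tendsto (fun n => (Q[g|ℱ n]) x) atTop (nhds (g x)) :=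
      hg_int.tendsto_ae_condExp hgsm'
    have hlower : J ≤ atTop.liminf T := by
      have hJliminf : J = ∫⁻ x, atTop.liminf
          (fun n => ENNReal.ofReal (c n x * Real.log (c n x) + Real.exp (-1))) ∂Q := by
        refine lintegral_congr_ae ?_
        filter_upwards [hconv] with x hx
        have h1 : Tendsto (fun n => c n x) atTop (nhds (g x)) := hx
        have h2 : Tendsto (fun n => ENNReal.ofReal (c n x * Real.log (c n x) + Real.exp (-1)))
            atTop (nhds (ENNReal.ofReal (g x * Real.log (g x) + Real.exp (-1)))) := by
          refine (ENNReal.continuous_ofReal.tendsto _).comp ?_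
          exact ((Real.continuous_mul_log.tendsto _).comp h1).add tendsto_const_nhds
        exact h2.liminf_eq.symm
      rw [hJliminf]
      refine lintegral_liminf_le fun n => ?_
      exact (((hcmeas n).mul (Real.measurable_log.comp (hcmeas n))).add_const _).ennreal_ofReal
    have hT_tendsto : Tendsto T atTop (nhds J) := by
      refine tendsto_of_le_liminf_of_limsup_le hlower ?_
      exact Filter.limsup_le_of_le (by isBoundedDefault) (Filter.Eventually.of_forall hupper)
    have hfinal : Tendsto (fun n => T n - e) atTop (nhds (J - e)) :=
      ((ENNReal.continuous_sub_right e).continuousAt.tendsto).comp hT_tendsto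
    rw [hstep2]
    exact hfinal.congr fun n => (hstep1 n).symm
  · -- singular case
    have hklTop : @klDivergence α mΩ P Q = ⊤ := by
      rw [klDivergence_def', if_neg (fun hcontr => hAC hcontr.1)]
    obtain ⟨A, hAmeas, hQA, hPA⟩ :
        ∃ A : Set α, MeasurableSet[mΩ] A ∧ Q A = 0 ∧ P A ≠ 0 := by
      by_contra hno
      push_neg at hno
      exact hAC (Measure.AbsolutelyContinuous.mk fun s hs hQs => hno s hs hQs)
    set R : @Measure α mΩ := P + Q with hRdef
    haveI : IsFiniteMeasure R := by
      constructor
      rw [hRdef]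
      simp [measure_lt_top]
    set u : α → ℝ := A.indicator fun _ => (1:ℝ) with hudef
    have hu_int : Integrable u R := (integrable_const 1).indicator hAmeas
    have hu_sm : StronglyMeasurable[mΩ] u := stronglyMeasurable_const.indicator hAmeas
    have hu_sm' : StronglyMeasurable[⨆ n, (ℱ n : MeasurableSpace α)] u := hu_sm
    haveI : SigmaFiniteFiltration R ℱ := IsFiniteMeasure.sigmaFiniteFiltration R ℱ
    set c : ℕ → α → ℝ := fun n => R[u | F n] with hcdef
    have hconv0 : ∀ᵐ x ∂ R, Tendsto (fun n => (R[u|ℱ n]) x) atTop (nhds (u x)) :=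
      hu_int.tendsto_ae_condExp hu_sm'
    have hconv : ∀ᵐ x ∂ R, Tendsto (fun n => c n x) atTop (nhds (u x)) := hconv0
    set An : ℕ → Set α := fun n => (c n) ⁻¹' (Set.Ioi (1/2 : ℝ)) with hAndef
    have hAn_m : ∀ n, MeasurableSet[F n] (An n) := fun n =>
      (stronglyMeasurable_condExp (m := F n)).measurable measurableSet_Ioi
    have hAn_m' : ∀ n, MeasurableSet[mΩ] (An n) := fun n => (hle n) _ (hAn_m n)
    -- convergence of the measures of An
    have key : ∀ μ : @Measure α mΩ, IsProbabilityMeasure μ → μ ≤ R →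
        Tendsto (fun n => (μ (An n)).toReal) atTop (nhds ((μ A).toReal)) := by
      intro μ hμ hμR
      haveI := hμ
      have hμac : μ ≪ R := Measure.absolutelyContinuous_of_le hμR
      have hconvμ : ∀ᵐ x ∂μ, Tendsto (fun n => c n x) atTop (nhds (u x)) :=
        hμac.ae_le hconv
      have hlim : ∀ᵐ x ∂μ, Tendsto (fun n => (An n).indicator (fun _ => (1:ℝ)) x)
          atTop (nhds (u x)) := by
        filter_upwards [hconvμ] with x hx
        by_cases hxA : x ∈ A
        · have hux : u x = 1 := by simp [hudef, hxA]
          rw [hux] at hx ⊢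
          have hev : ∀ᶠ n in atTop, x ∈ An n :=
            hx.eventually (eventually_gt_nhds (by norm_num : (1:ℝ)/2 < 1))
          refine Tendsto.congr' ?_ (tendsto_const_nhds : Tendsto (fun _ : ℕ => (1:ℝ)) atTop (nhds 1))
          filter_upwards [hev] with n hn
          simp [Set.indicator_of_mem hn]
        · have hux : u x = 0 := by simp [hudef, hxA]
          rw [hux] at hx ⊢
          have hev : ∀ᶠ n in atTop, ¬ x ∈ An n := by
            have := hx.eventually (eventually_lt_nhds (by norm_num : (0:ℝ) < 1/2))
            filter_upwards [this] with n hn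
            simp only [hAndef, Set.mem_preimage, Set.mem_Ioi]
            linarith
          refine Tendsto.congr' ?_ (tendsto_const_nhds : Tendsto (fun _ : ℕ => (0:ℝ)) atTop (nhds 0))
          filter_upwards [hev] with n hn
          simp [Set.indicator_of_notMem hn]
      have hInd : ∀ n, ∫ x, (An n).indicator (fun _ => (1:ℝ)) x ∂μ = (μ (An n)).toReal := by
        intro n
        rw [integral_indicator (hAn_m' n)]
        simp
        rfl
      have hIndA : ∫ x, u x ∂μ = (μ A).toReal := by
        rw [hudef, integral_indicator hAmeas]
        simp
        rfl
      have := tendsto_integral_of_dominated_convergence (fun _ => (1:ℝ))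
        (fun n => (stronglyMeasurable_const.indicator (hAn_m' n)).aestronglyMeasurable)
        (integrable_const 1)
        (fun n => Filter.Eventually.of_forall fun x => by
          by_cases hx : x ∈ An n
          · simp [Set.indicator_of_mem hx]
          · simp [Set.indicator_of_notMem hx])
        hlim
      rw [hIndA] at this
      exact this.congr fun n => hInd n
    have hPtend := key P hP (Measure.le_add_right le_rfl)
    have hQtend := key Q hQ (Measure.le_add_left le_rfl)
    rw [hQA, ENNReal.toReal_zero] at hQtend
    -- conclude divergence to ⊤
    rw [hklTop]
    refine ENNReal.tendsto_nhds_top fun M => ?_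
    set ε : ℝ := (P A).toReal with hεdef
    have hε : 0 < ε := ENNReal.toReal_pos hPA (measure_ne_top P A)
    set q : ℝ := Real.exp (2 * (M + 2) / ε) with hqdef
    have hq : 0 < q := Real.exp_pos _
    have hlogq : Real.log q = 2 * (M + 2) / ε := Real.log_exp _
    have hlogq0 : 0 < Real.log q := by rw [hlogq]; positivity
    have ev1 : ∀ᶠ n in atTop, ε / 2 < (P (An n)).toReal :=
      hPtend.eventually (eventually_gt_nhds (half_lt_self hε))
    have ev2 : ∀ᶠ n in atTop, (Q (An n)).toReal < 1 / (2 * q) :=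
      hQtend.eventually (eventually_lt_nhds (by positivity))
    filter_upwards [ev1, ev2] with n h1 h2
    haveI := hPtr n; haveI := hQtr n
    have hbound := klDivergence_ge_bound (mα := F n)
      (P.trim (le_iSup F n)) (Q.trim (le_iSup F n)) (hAn_m n) hq
    rw [trim_measurableSet_eq (hle n) (hAn_m n), trim_measurableSet_eq (hle n) (hAn_m n)]
      at hbound
    refine lt_of_lt_of_le ?_ hbound
    rw [show ((M : ℝ≥0∞)) = ENNReal.ofReal (M : ℝ) by simp [ENNReal.ofReal_natCast]]
    rw [ENNReal.ofReal_lt_ofReal_iff_of_nonneg (by positivity)]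
    set Pn := (P (An n)).toReal
    set Qn := (Q (An n)).toReal
    have hPn0 : 0 ≤ Pn := ENNReal.toReal_nonneg
    have hQn0 : 0 ≤ Qn := ENNReal.toReal_nonneg
    have hq1 : q * Qn < 1 / 2 := by
      calc q * Qn < q * (1 / (2*q)) := by exact mul_lt_mul_of_pos_left h2 hq
        _ = 1/2 := by field_simp
    have hq2 : (M + 2 : ℝ) < Pn * Real.log q := by
      have hhalf : ε / 2 * Real.log q < Pn * Real.log q :=
        mul_lt_mul_of_pos_right h1 hlogq0
      have hcomp : ε / 2 * Real.log q = M + 2 := by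
        rw [hlogq]; field_simp
      linarith
    linarith
end
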